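/- Let m ≥ 1, let r₁, …, r_m > 0 and v₁, …, v_m ∈ ℝ, and define f : ℝ → ℝ by f(t) = t + (1/2) Σ_{i : r_i v_i ≤ t} (1/r_i) (t − r_i v_i)². Then f is convex and continuously differentiable on ℝ, with derivative f'(t) = 1 + Σ_{i : r_i v_i ≤ t} ( t/r_i − v_i ) for every t ∈ ℝ. -/

import Mathlib

open Filter Asymptotics

lemma maxsq_hasDerivAt (x : ℝ) :
    HasDerivAt (fun y : ℝ => (max y 0) ^ 2) (2 * max x 0) x := by
  rcases lt_trichotomy x 0 with hx | hx | hx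
  · have h0 : HasDerivAt (fun _ : ℝ => (0 : ℝ)) 0 x := hasDerivAt_const x 0
    have : (fun y : ℝ => (max y 0) ^ 2) =ᶠ[nhds x] fun _ => (0 : ℝ) := by
      filter_upwards [Iio_mem_nhds hx] with y hy
      simp [max_eq_right (le_of_lt (Set.mem_Iio.mp hy))]
    simpa [max_eq_right hx.le] using h0.congr_of_eventuallyEq this
  · subst hx
    rw [hasDerivAt_iff_isLittleO]
    simp only [max_self, ne_eq, OfNat.ofNat_ne_zero, not_false_eq_true, zero_pow, mul_zero,
      smul_zero, sub_zero]
    rw [isLittleO_iff]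
    intro ε hε
    filter_upwards [Metric.ball_mem_nhds (0:ℝ) hε] with y hy
    simp only [Metric.mem_ball, Real.dist_eq, sub_zero] at hy
    have h1 : |max y 0| ≤ |y| := by
      rcases le_or_gt y 0 with h | h
      · simp [max_eq_right h]
      · simp [max_eq_left h.le]
    have : ‖(max y 0) ^ 2‖ ≤ |y| * |y| := by
      rw [Real.norm_eq_abs, abs_pow, sq]
      exact mul_le_mul h1 h1 (abs_nonneg _) (abs_nonneg _)
    calc ‖(max y 0) ^ 2‖ ≤ |y| * |y| := this
      _ ≤ ε * ‖y‖ := by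
        apply mul_le_mul_of_nonneg_right hy.le (abs_nonneg _)
  · have h0 : HasDerivAt (fun y : ℝ => y ^ 2) (2 * x) x := by
      simpa using hasDerivAt_pow 2 x
    have : (fun y : ℝ => (max y 0) ^ 2) =ᶠ[nhds x] fun y => y ^ 2 := by
      filter_upwards [Ioi_mem_nhds hx] with y hy
      simp [max_eq_left (le_of_lt (Set.mem_Ioi.mp hy))]
    simpa [max_eq_left hx.le] using h0.congr_of_eventuallyEq this

/-- The one-dimensional dual reduction
`f(t) = t + ½ Σ_{i : rᵢvᵢ ≤ t} (1/rᵢ)(t − rᵢvᵢ)²` arising in the weighted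
projection onto the probability simplex is convex and continuously
differentiable, with derivative `f'(t) = 1 + Σ_{i : rᵢvᵢ ≤ t} (t/rᵢ − vᵢ)`. -/
theorem stmt_13 (m : ℕ) (hm : 1 ≤ m) (r v : Fin m → ℝ) (hr : ∀ i, 0 < r i) :
    ConvexOn ℝ Set.univ (fun t : ℝ =>
      t + (1 / 2) * ∑ i, if r i * v i ≤ t then (1 / r i) * (t - r i * v i) ^ 2 else 0) ∧
    (∀ t : ℝ, HasDerivAt (fun t : ℝ =>
        t + (1 / 2) * ∑ i, if r i * v i ≤ t then (1 / r i) * (t - r i * v i) ^ 2 else 0)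
      (1 + ∑ i, if r i * v i ≤ t then t / r i - v i else 0) t) ∧
    Continuous (fun t : ℝ => 1 + ∑ i, if r i * v i ≤ t then t / r i - v i else 0) := by
  -- rewrite f in max-form
  have hrne : ∀ i, r i ≠ 0 := fun i => (hr i).ne'
  have hfeq : (fun t : ℝ =>
      t + (1 / 2) * ∑ i, if r i * v i ≤ t then (1 / r i) * (t - r i * v i) ^ 2 else 0)
      = fun t : ℝ => t + (1 / 2) * ∑ i, (1 / r i) * (max (t - r i * v i) 0) ^ 2 := by
    funext t
    congr 1
    congr 1
    apply Finset.sum_congr rfl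
    intro i _
    by_cases h : r i * v i ≤ t
    · simp only [if_pos h, max_eq_left (sub_nonneg.mpr h)]
    · push_neg at h
      simp [not_le.mpr h, max_eq_right (sub_nonpos.mpr h.le)]
  have hgeq : ∀ t : ℝ, (1 + ∑ i, if r i * v i ≤ t then t / r i - v i else 0)
      = 1 + ∑ i, (1 / r i) * max (t - r i * v i) 0 := by
    intro t
    congr 1
    apply Finset.sum_congr rfl
    intro i _
    by_cases h : r i * v i ≤ t
    · rw [if_pos h, max_eq_left (sub_nonneg.mpr h)]
      rw [one_div, inv_mul_eq_div, sub_div, mul_comm (r i) (v i), mul_div_assoc, div_self (hrne i), mul_one]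
    · push_neg at h
      rw [if_neg (not_le.mpr h), max_eq_right (sub_nonpos.mpr h.le), mul_zero]
  have hgfun : (fun t : ℝ => 1 + ∑ i, if r i * v i ≤ t then t / r i - v i else 0)
      = fun t : ℝ => 1 + ∑ i, (1 / r i) * max (t - r i * v i) 0 := funext hgeq
  -- derivative everywhere
  have hderiv : ∀ t : ℝ, HasDerivAt (fun t : ℝ =>
      t + (1 / 2) * ∑ i, if r i * v i ≤ t then (1 / r i) * (t - r i * v i) ^ 2 else 0)
      (1 + ∑ i, if r i * v i ≤ t then t / r i - v i else 0) t := by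
    intro t
    rw [hfeq, hgeq]
    have hsum : HasDerivAt (fun t : ℝ => ∑ i, (1 / r i) * (max (t - r i * v i) 0) ^ 2)
        (∑ i, (1 / r i) * (2 * max (t - r i * v i) 0)) t := by
      apply HasDerivAt.fun_sum
      intro i _
      have h1 : HasDerivAt (fun t : ℝ => t - r i * v i) 1 t := by
        simpa using (hasDerivAt_id t).sub_const (r i * v i)
      have h2 := (maxsq_hasDerivAt (t - r i * v i)).comp t h1
      simpa using h2.const_mul (1 / r i)
    have : HasDerivAt (fun y : ℝ => y + (1 / 2 : ℝ) * ∑ i, (1 / r i) * (max (y - r i * v i) 0) ^ 2)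
        (1 + (1 / 2 : ℝ) * ∑ i, (1 / r i) * (2 * max (t - r i * v i) 0)) t :=
      (hasDerivAt_id t).add (hsum.const_mul (1 / 2 : ℝ))
    convert this using 1
    rw [Finset.mul_sum]
    congr 1
    apply Finset.sum_congr rfl
    intro i _
    ring
  -- continuity of derivative
  have hcont : Continuous (fun t : ℝ => 1 + ∑ i, if r i * v i ≤ t then t / r i - v i else 0) := by
    rw [hgfun]
    apply Continuous.add continuous_const
    apply continuous_finset_sum
    intro i _
    exact continuous_const.mul ((continuous_id.sub continuous_const).max continuous_const)
  refine ⟨?_, hderiv, hcont⟩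
  -- convexity via monotone derivative
  have hdiff : Differentiable ℝ (fun t : ℝ =>
      t + (1 / 2) * ∑ i, if r i * v i ≤ t then (1 / r i) * (t - r i * v i) ^ 2 else 0) :=
    fun t => (hderiv t).differentiableAt
  apply Monotone.convexOn_univ_of_deriv hdiff
  have hd : deriv (fun t : ℝ =>
      t + (1 / 2) * ∑ i, if r i * v i ≤ t then (1 / r i) * (t - r i * v i) ^ 2 else 0)
      = fun t => 1 + ∑ i, if r i * v i ≤ t then t / r i - v i else 0 := by
    funext t; exact (hderiv t).deriv
  rw [hd, hgfun]
  apply Monotone.const_add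
  intro a b hab
  apply Finset.sum_le_sum
  intro i _
  apply mul_le_mul_of_nonneg_left _ (one_div_nonneg.mpr (hr i).le)
  exact max_le_max (by linarith) le_rfl
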